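/- Suppose fourteen nonzero integers u₁,…,u₇, v₁,…,v₇ satisfy u₁v₁ = 1, u₂v₂ = 2 (so u₁ = v₁ = ±1) with (u₁,v₁) = (−1,−1), (u₂,v₂) = (−1,−2), and the relation Σᵢ (1/uᵢ + 1/vᵢ) = 4. Then among the ten numbers u₃,…,u₇,v₃,…,v₇, counting the number n₁ of 1's and n₂ of 2's, one has 4n₁ + n₂ ≥ 22 and hence n₁ ≥ 4. -/

import Mathlib

lemma key_inv_bound (x : ℤ) (hx : x ≠ 0) :
    ((x:ℚ))⁻¹ ≤ 1/3 + (2/3) * (if x = 1 then 1 else 0) + (1/6) * (if x = 2 then 1 else 0) := by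
  by_cases e1 : x = 1
  · subst e1; norm_num
  by_cases e2 : x = 2
  · subst e2; norm_num
  simp only [e1, e2, if_false]
  have h : x ≤ -1 ∨ 3 ≤ x := by omega
  rcases h with h | h
  · have hx' : (x:ℚ) ≤ -1 := by exact_mod_cast h
    have : (x:ℚ)⁻¹ < 0 := inv_lt_zero.mpr (by linarith)
    linarith
  · have h3 : (3:ℚ) ≤ (x:ℚ) := by exact_mod_cast h
    have : (x:ℚ)⁻¹ ≤ (3:ℚ)⁻¹ := by
      apply inv_anti₀ (by norm_num) h3
    norm_num at this ⊢
    linarith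

lemma list_inv_bound (L : List ℤ) (h : ∀ x ∈ L, x ≠ 0) :
    (L.map fun x : ℤ => ((x:ℚ))⁻¹).sum ≤
      (L.length : ℚ)/3 + (2/3) * (L.count 1) + (1/6) * (L.count 2) := by
  induction L with
  | nil => simp
  | cons a t ih =>
    have ha := h a (List.mem_cons_self)
    have ht := ih (fun x hx => h x (List.mem_cons_of_mem a hx))
    have hk := key_inv_bound a ha
    simp only [List.map_cons, List.sum_cons, List.count_cons, List.length_cons,
      beq_iff_eq]
    by_cases e1 : a = 1
    · subst e1; simp only [if_true, eq_self_iff_true]; norm_num at hk ⊢; push_cast; linarith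
    · by_cases e2 : a = 2
      · subst e2
        simp only [e1] at hk ⊢
        norm_num at hk ⊢
        push_cast
        linarith
      · simp only [e1, e2, if_false] at hk ⊢
        push_cast
        linarith

theorem count_ones_and_twos (u v : Fin 7 → ℤ)
    (hu : ∀ i, u i ≠ 0) (hv : ∀ i, v i ≠ 0)
    (h1 : u 0 = -1) (h1' : v 0 = -1) (h2 : u 1 = -1) (h2' : v 1 = -2)
    (hrel : ∑ i : Fin 7, ((u i : ℚ)⁻¹ + (v i : ℚ)⁻¹) = 4)
    (L : List ℤ) (hL : L = [u 2, u 3, u 4, u 5, u 6, v 2, v 3, v 4, v 5, v 6]) :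
    4 * L.count 1 + L.count 2 ≥ 22 ∧ L.count 1 ≥ 4 := by
  subst hL
  have hmem : ∀ x ∈ [u 2, u 3, u 4, u 5, u 6, v 2, v 3, v 4, v 5, v 6], x ≠ 0 := by
    intro x hx
    simp only [List.mem_cons, List.not_mem_nil, or_false] at hx
    rcases hx with rfl|rfl|rfl|rfl|rfl|rfl|rfl|rfl|rfl|rfl <;> first | exact hu _ | exact hv _
  have hb := list_inv_bound _ hmem
  simp only [Fin.sum_univ_seven] at hrel
  rw [h1, h1', h2, h2'] at hrel
  norm_num at hrel
  simp only [List.map_cons, List.map_nil, List.sum_cons, List.sum_nil, List.length_cons,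
    List.length_nil] at hb
  set n1 := ([u 2, u 3, u 4, u 5, u 6, v 2, v 3, v 4, v 5, v 6].count 1) with hn1
  set n2 := ([u 2, u 3, u 4, u 5, u 6, v 2, v 3, v 4, v 5, v 6].count 2) with hn2
  have h25 : (25:ℚ) ≤ 4 * (n1:ℚ) + (n2:ℚ) := by push_cast at hb ⊢; linarith
  have h25' : 25 ≤ 4 * n1 + n2 := by exact_mod_cast h25
  have hlen : n2 ≤ 10 := by
    have := List.count_le_length (a := (2:ℤ)) (l := [u 2, u 3, u 4, u 5, u 6, v 2, v 3, v 4, v 5, v 6])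
    simpa using this
  constructor <;> omega
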